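/- With the standing setup, regard the time-weighted LP trajectory metric as a function of the switching parameter: write d̄_γ(X, Y) for the infimum of the objective c(X, Y, W^{1:T}) (with switching penalty γ) over sequences of matrices satisfying the relaxed assignment constraints. Then for any fixed indexed families of trajectories X and Y, d̄_γ(X, Y) tends to d^0(X, Y) as γ tends to 0 from above, where d^0(X, Y) = ( Σ_{k=1}^{T} w1(k) · GOSPA_k(X, Y)^p )^(1/p) is the p-th root of the weighted sum over time of the GOSPA costs to the p-th power. -/

import Mathlib

open Finset

noncomputable section

/-- The GOSPA base distance on `Option E`. -/
def dG {E : Type*} [MetricSpace E] (c p : ℝ) : Option E → Option E → ℝ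
  | some x, some y => min c (dist x y)
  | none, none => 0
  | _, _ => c / 2 ^ (1 / p)

/-- Relaxed assignment constraints for a soft-assignment matrix. -/
def Relaxed {m n : ℕ} (W : Matrix (Fin (m + 1)) (Fin (n + 1)) ℝ) : Prop :=
  (∀ i j, 0 ≤ W i j) ∧
  (∀ j : Fin n, ∑ i, W i j.castSucc = 1) ∧
  (∀ i : Fin m, ∑ j, W i.castSucc j = 1) ∧
  W (Fin.last m) (Fin.last n) = 0

/-- A matrix is binary if every entry is `0` or `1`. -/
def IsBinary {m n : ℕ} (W : Matrix (Fin (m + 1)) (Fin (n + 1)) ℝ) : Prop :=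
  ∀ i j, W i j = 0 ∨ W i j = 1

/-- Extend an indexed family of trajectories with an extra all-`none` trajectory. -/
def extTraj {E : Type*} {T n : ℕ} (X : Fin n → Fin T → Option E) :
    Fin (n + 1) → Fin T → Option E :=
  fun i => if h : (i : ℕ) < n then X ⟨i, h⟩ else fun _ => none

/-- The matrix `D^k_{X,Y}(i,j) = dG(X_i(k), Y_j(k))^p` of localisation costs at time `k`. -/
def Dmat {E : Type*} [MetricSpace E] (c p : ℝ) {T nX nY : ℕ}
    (X : Fin nX → Fin T → Option E) (Y : Fin nY → Fin T → Option E) (k : Fin T) :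
    Matrix (Fin (nX + 1)) (Fin (nY + 1)) ℝ :=
  fun i j => dG c p (extTraj X i k) (extTraj Y j k) ^ p

/-- The objective of the time-weighted LP trajectory metric for a sequence of
soft-assignment matrices `W`. -/
def obj {E : Type*} [MetricSpace E] (c p γ : ℝ) (w1 w2 : ℕ → ℝ) {T nX nY : ℕ}
    (X : Fin nX → Fin T → Option E) (Y : Fin nY → Fin T → Option E)
    (W : Fin T → Matrix (Fin (nX + 1)) (Fin (nY + 1)) ℝ) : ℝ :=
  (∑ k : Fin T, w1 k.1 * ∑ i, ∑ j, Dmat c p X Y k i j * W k i j +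
      γ ^ p / 2 * ∑ k : Fin (T - 1), w2 k.1 *
        ∑ i : Fin nX, ∑ j : Fin nY,
          |W ⟨k.1, by have := k.2; omega⟩ i.castSucc j.castSucc -
            W ⟨k.1 + 1, by have := k.2; omega⟩ i.castSucc j.castSucc|) ^ (1 / p)

/-- The time-weighted LP trajectory metric: infimum of the objective over all sequences of
matrices satisfying the relaxed assignment constraints. -/
def dbar {E : Type*} [MetricSpace E] (c p γ : ℝ) (w1 w2 : ℕ → ℝ) {T nX nY : ℕ}
    (X : Fin nX → Fin T → Option E) (Y : Fin nY → Fin T → Option E) : ℝ :=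
  ⨅ W : {W : Fin T → Matrix (Fin (nX + 1)) (Fin (nY + 1)) ℝ // ∀ k, Relaxed (W k)},
    obj c p γ w1 w2 X Y W.1

/-- The time-weighted multi-dimensional assignment metric: infimum of the objective over all
sequences of binary matrices satisfying the relaxed assignment constraints. -/
def dmd {E : Type*} [MetricSpace E] (c p γ : ℝ) (w1 w2 : ℕ → ℝ) {T nX nY : ℕ}
    (X : Fin nX → Fin T → Option E) (Y : Fin nY → Fin T → Option E) : ℝ :=
  ⨅ W : {W : Fin T → Matrix (Fin (nX + 1)) (Fin (nY + 1)) ℝ //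
      ∀ k, Relaxed (W k) ∧ IsBinary (W k)},
    obj c p γ w1 w2 X Y W.1

/-- Distance between the states of two present targets (junk value `0` otherwise). -/
def optDist {E : Type*} [MetricSpace E] : Option E → Option E → ℝ
  | some x, some y => dist x y
  | _, _ => 0

/-- A valid GOSPA assignment set at time `k`: a set of pairs of indices of targets that
exist at time `k`, in which every index appears at most once. -/
def ValidTheta {E : Type*} {T nX nY : ℕ} (X : Fin nX → Fin T → Option E)
    (Y : Fin nY → Fin T → Option E) (k : Fin T) (θ : Finset (Fin nX × Fin nY)) : Prop :=
  (∀ q ∈ θ, X q.1 k ≠ none ∧ Y q.2 k ≠ none) ∧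
  (∀ q ∈ θ, ∀ q' ∈ θ, (q.1 = q'.1 ∨ q.2 = q'.2) → q = q')

/-- `|τ^k(X)|`: the number of targets present at time `k`. -/
def tauCard {E : Type*} {T n : ℕ} (X : Fin n → Fin T → Option E) (k : Fin T) : ℕ :=
  (Finset.univ.filter (fun i => (X i k).isSome)).card

/-- The GOSPA cost (to the `p`-th power) at time step `k`. -/
def gospaP {E : Type*} [MetricSpace E] (c p : ℝ) {T nX nY : ℕ}
    (X : Fin nX → Fin T → Option E) (Y : Fin nY → Fin T → Option E) (k : Fin T) : ℝ :=
  sInf {r | ∃ θ : Finset (Fin nX × Fin nY), ValidTheta X Y k θ ∧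
    r = ∑ q ∈ θ, optDist (X q.1 k) (Y q.2 k) ^ p +
      c ^ p / 2 * ((tauCard X k : ℝ) + (tauCard Y k : ℝ) - 2 * (θ.card : ℝ))}

/-- `d^0`: the `p`-th root of the time-weighted sum of the GOSPA costs to the `p`-th power. -/
def d0 {E : Type*} [MetricSpace E] (c p : ℝ) (w1 : ℕ → ℝ) {T nX nY : ℕ}
    (X : Fin nX → Fin T → Option E) (Y : Fin nY → Fin T → Option E) : ℝ :=
  (∑ k : Fin T, w1 k.1 * gospaP c p X Y k) ^ (1 / p)
section AuxBasic

variable {E : Type*} [MetricSpace E]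

lemma rpow_half_eval {c p : ℝ} (hc : 0 ≤ c) (hp : 1 ≤ p) :
    (c / 2 ^ (1 / p)) ^ p = c ^ p / 2 := by
  have hp0 : p ≠ 0 := by intro h; rw [h] at hp; linarith
  rw [Real.div_rpow hc (Real.rpow_nonneg (by norm_num) _),
    ← Real.rpow_mul (by norm_num : (0:ℝ) ≤ 2), one_div, inv_mul_cancel₀ hp0, Real.rpow_one]

lemma dG_nonneg {c p : ℝ} (hc : 0 < c) (a b : Option E) : 0 ≤ dG c p a b := by
  have h2 : (0:ℝ) < 2 ^ (1/p) := Real.rpow_pos_of_pos (by norm_num) _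
  cases a <;> cases b <;>
    simp only [dG] <;>
    first
      | positivity
      | exact le_min hc.le dist_nonneg

lemma dG_some_none {c p : ℝ} (x : E) : dG c p (some x) none = c / 2 ^ (1/p) := rfl
lemma dG_none_some {c p : ℝ} (y : E) : dG c p none (some y) = c / 2 ^ (1/p) := rfl
lemma dG_none_none {c p : ℝ} : dG c p (none : Option E) none = 0 := rfl
lemma dG_some_some {c p : ℝ} (x y : E) : dG c p (some x) (some y) = min c (dist x y) := rfl

end AuxBasic
section AuxGospa

variable {E : Type*} [MetricSpace E] {T nX nY : ℕ}

lemma extTraj_castSucc {n : ℕ} (X : Fin n → Fin T → Option E) (i : Fin n) :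
    extTraj X i.castSucc = X i := by
  simp only [extTraj, Fin.coe_castSucc, i.isLt, dif_pos, Fin.eta]

lemma extTraj_last {n : ℕ} (X : Fin n → Fin T → Option E) :
    extTraj X (Fin.last n) = fun _ => none := by
  simp only [extTraj, Fin.val_last, lt_self_iff_false, dif_neg, not_false_iff]

variable (X : Fin nX → Fin T → Option E) (Y : Fin nY → Fin T → Option E) (k : Fin T)

/-- The GOSPA cost of an assignment set. -/
def thetaCost (c p : ℝ) (θ : Finset (Fin nX × Fin nY)) : ℝ :=
  ∑ q ∈ θ, optDist (X q.1 k) (Y q.2 k) ^ p +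
    c ^ p / 2 * ((tauCard X k : ℝ) + (tauCard Y k : ℝ) - 2 * (θ.card : ℝ))

lemma gospaP_eq_sInf (c p : ℝ) :
    gospaP c p X Y k = sInf {r | ∃ θ, ValidTheta X Y k θ ∧ r = thetaCost X Y k c p θ} := rfl

lemma validTheta_empty : ValidTheta X Y k (∅ : Finset (Fin nX × Fin nY)) := by
  constructor <;> intro q hq <;> simp at hq

lemma card_le_tauCard_fst {θ : Finset (Fin nX × Fin nY)} (hθ : ValidTheta X Y k θ) :
    θ.card ≤ tauCard X k := by
  classical
  apply Finset.card_le_card_of_injOn (fun q => q.1)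
  · intro q hq
    simp only [tauCard, Finset.mem_filter, Finset.mem_univ, true_and]
    exact Finset.mem_coe.2 (Finset.mem_filter.2 ⟨Finset.mem_univ _, Option.ne_none_iff_isSome.1 (hθ.1 q hq).1⟩)
  · intro q hq q' hq' h
    exact hθ.2 q hq q' hq' (Or.inl h)

lemma card_le_tauCard_snd {θ : Finset (Fin nX × Fin nY)} (hθ : ValidTheta X Y k θ) :
    θ.card ≤ tauCard Y k := by
  classical
  apply Finset.card_le_card_of_injOn (fun q => q.2)
  · intro q hq
    simp only [tauCard, Finset.mem_filter, Finset.mem_univ, true_and]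
    exact Finset.mem_coe.2 (Finset.mem_filter.2 ⟨Finset.mem_univ _, Option.ne_none_iff_isSome.1 (hθ.1 q hq).2⟩)
  · intro q hq q' hq' h
    exact hθ.2 q hq q' hq' (Or.inr h)

lemma optDist_nonneg (a b : Option E) : 0 ≤ optDist a b := by
  cases a <;> cases b <;> simp [optDist, dist_nonneg]

lemma thetaCost_nonneg {c p : ℝ} (hc : 0 ≤ c) {θ : Finset (Fin nX × Fin nY)}
    (hθ : ValidTheta X Y k θ) : 0 ≤ thetaCost X Y k c p θ := by
  have h1 : 0 ≤ ∑ q ∈ θ, optDist (X q.1 k) (Y q.2 k) ^ p :=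
    Finset.sum_nonneg fun q _ => Real.rpow_nonneg (optDist_nonneg _ _) _
  have h2 : (θ.card : ℝ) ≤ tauCard X k := Nat.cast_le.2 (card_le_tauCard_fst X Y k hθ)
  have h3 : (θ.card : ℝ) ≤ tauCard Y k := Nat.cast_le.2 (card_le_tauCard_snd X Y k hθ)
  have h4 : (0:ℝ) ≤ c ^ p / 2 := by positivity
  unfold thetaCost
  nlinarith

lemma gospaSet_nonempty (c p : ℝ) :
    {r | ∃ θ, ValidTheta X Y k θ ∧ r = thetaCost X Y k c p θ}.Nonempty :=
  ⟨_, ∅, validTheta_empty X Y k, rfl⟩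

lemma gospaSet_bddBelow {c p : ℝ} (hc : 0 ≤ c) :
    BddBelow {r | ∃ θ, ValidTheta X Y k θ ∧ r = thetaCost X Y k c p θ} := by
  refine ⟨0, fun r hr => ?_⟩
  obtain ⟨θ, hθ, rfl⟩ := hr
  exact thetaCost_nonneg X Y k hc hθ

lemma gospaSet_finite (c p : ℝ) :
    {r | ∃ θ, ValidTheta X Y k θ ∧ r = thetaCost X Y k c p θ}.Finite := by
  classical
  apply Set.Finite.subset (Set.finite_range (thetaCost X Y k c p))
  rintro r ⟨θ, _, rfl⟩
  exact ⟨θ, rfl⟩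

lemma gospaP_nonneg {c p : ℝ} (hc : 0 ≤ c) : 0 ≤ gospaP c p X Y k := by
  rw [gospaP_eq_sInf]
  apply le_csInf (gospaSet_nonempty X Y k c p)
  rintro r ⟨θ, hθ, rfl⟩
  exact thetaCost_nonneg X Y k hc hθ

lemma gospaP_le_thetaCost {c p : ℝ} (hc : 0 ≤ c) {θ : Finset (Fin nX × Fin nY)}
    (hθ : ValidTheta X Y k θ) : gospaP c p X Y k ≤ thetaCost X Y k c p θ := by
  rw [gospaP_eq_sInf]
  exact csInf_le (gospaSet_bddBelow X Y k hc) ⟨θ, hθ, rfl⟩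

lemma exists_optimal_theta (c p : ℝ) :
    ∃ θ, ValidTheta X Y k θ ∧ gospaP c p X Y k = thetaCost X Y k c p θ := by
  have := (gospaSet_nonempty X Y k c p).csInf_mem (gospaSet_finite X Y k c p)
  rw [gospaP_eq_sInf]
  exact this

end AuxGospa
section AuxCore

open Sum

variable {E : Type*} [MetricSpace E] {T nX nY : ℕ}
variable (c p : ℝ) (X : Fin nX → Fin T → Option E) (Y : Fin nY → Fin T → Option E) (k : Fin T)

lemma Dmat_castSucc (i : Fin nX) (j : Fin nY) :
    Dmat c p X Y k i.castSucc j.castSucc = dG c p (X i k) (Y j k) ^ p := by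
  simp [Dmat, extTraj_castSucc]

lemma Dmat_last_right (i : Fin nX) :
    Dmat c p X Y k i.castSucc (Fin.last nY) = dG c p (X i k) none ^ p := by
  simp [Dmat, extTraj_castSucc, extTraj_last]

lemma Dmat_last_left (j : Fin nY) :
    Dmat c p X Y k (Fin.last nX) j.castSucc = dG c p none (Y j k) ^ p := by
  simp [Dmat, extTraj_castSucc, extTraj_last]

lemma Dmat_last_last (hp : 1 ≤ p) :
    Dmat c p X Y k (Fin.last nX) (Fin.last nY) = 0 := by
  have hp0 : p ≠ 0 := by intro h; rw [h] at hp; linarith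
  simp [Dmat, extTraj_last, dG_none_none, Real.zero_rpow hp0]

lemma dGp_some_none (hc : 0 ≤ c) (hp : 1 ≤ p) (a : Option E) (ha : a.isSome) :
    dG c p a none ^ p = c ^ p / 2 := by
  obtain ⟨x, rfl⟩ := Option.isSome_iff_exists.1 ha
  rw [dG_some_none, rpow_half_eval hc hp]

lemma dGp_none_some (hc : 0 ≤ c) (hp : 1 ≤ p) (b : Option E) (hb : b.isSome) :
    dG c p none b ^ p = c ^ p / 2 := by
  obtain ⟨y, rfl⟩ := Option.isSome_iff_exists.1 hb
  rw [dG_none_some, rpow_half_eval hc hp]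

lemma dGp_none (hp : 1 ≤ p) (a : Option E) (ha : ¬ a.isSome) :
    dG c p a none ^ p = 0 := by
  have hp0 : p ≠ 0 := by intro h; rw [h] at hp; linarith
  rw [Option.not_isSome_iff_eq_none] at ha
  subst ha
  rw [dG_none_none, Real.zero_rpow hp0]

/-- The cost matrix on the square index set `Fin nX ⊕ Fin nY`. -/
def Cmat : Matrix (Fin nX ⊕ Fin nY) (Fin nX ⊕ Fin nY) ℝ :=
  fun a b => match a, b with
  | inl i, inr j => Dmat c p X Y k i.castSucc j.castSucc
  | inl i, inl _ => Dmat c p X Y k i.castSucc (Fin.last nY)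
  | inr _, inr j => Dmat c p X Y k (Fin.last nX) j.castSucc
  | inr _, inl _ => 0

lemma Cmat_inl_inr (i : Fin nX) (j : Fin nY) :
    Cmat c p X Y k (inl i) (inr j) = Dmat c p X Y k i.castSucc j.castSucc := rfl
lemma Cmat_inl_inl (i i' : Fin nX) :
    Cmat c p X Y k (inl i) (inl i') = Dmat c p X Y k i.castSucc (Fin.last nY) := rfl
lemma Cmat_inr_inr (j' j : Fin nY) :
    Cmat c p X Y k (inr j') (inr j) = Dmat c p X Y k (Fin.last nX) j.castSucc := rfl
lemma Cmat_inr_inl (j' : Fin nY) (i : Fin nX) :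
    Cmat c p X Y k (inr j') (inl i) = 0 := rfl

lemma gospaP_le_perm_sum (hc : 0 < c) (hp : 1 ≤ p) (σ : Equiv.Perm (Fin nX ⊕ Fin nY)) :
    gospaP c p X Y k ≤ ∑ s, Cmat c p X Y k s (σ s) := by
  classical
  have hcp2 : (0:ℝ) ≤ c ^ p / 2 := by positivity
  set θ : Finset (Fin nX × Fin nY) := Finset.univ.filter
    (fun q => σ (inl q.1) = inr q.2 ∧ (X q.1 k).isSome ∧ (Y q.2 k).isSome ∧
      optDist (X q.1 k) (Y q.2 k) < c) with hθdef
  have hmem : ∀ q : Fin nX × Fin nY, q ∈ θ ↔ (σ (inl q.1) = inr q.2 ∧ (X q.1 k).isSome ∧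
      (Y q.2 k).isSome ∧ optDist (X q.1 k) (Y q.2 k) < c) := by
    intro q; simp [hθdef]
  have hvalid : ValidTheta X Y k θ := by
    constructor
    · intro q hq
      rw [hmem] at hq
      exact ⟨Option.ne_none_iff_isSome.2 hq.2.1, Option.ne_none_iff_isSome.2 hq.2.2.1⟩
    · intro q hq q' hq' h
      rw [hmem] at hq hq'
      rcases h with h | h
      · have h2 : (inr q.2 : Fin nX ⊕ Fin nY) = inr q'.2 := by rw [← hq.1, ← hq'.1, h]
        exact Prod.ext h (inr.inj h2)
      · have h2 : σ (inl q.1) = σ (inl q'.1) := by rw [hq.1, hq'.1, h]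
        exact Prod.ext (inl.inj (σ.injective h2)) h
  refine le_trans (gospaP_le_thetaCost X Y k hc.le hvalid) ?_
  set α : Fin nX ⊕ Fin nY → ℝ := Sum.elim
    (fun i => (∑ q ∈ θ.filter (fun q => q.1 = i), optDist (X q.1 k) (Y q.2 k) ^ p)
        + (if (X i k).isSome ∧ ∀ j, (i, j) ∉ θ then c ^ p / 2 else 0))
    (fun _ => 0) with hα
  set β : Fin nX ⊕ Fin nY → ℝ := Sum.elim (fun _ => 0)
    (fun j => if (Y j k).isSome ∧ ∀ i, (i, j) ∉ θ then c ^ p / 2 else 0) with hβ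
  have key : ∀ s, α s + β (σ s) ≤ Cmat c p X Y k s (σ s) := by
    intro s
    match s with
    | inl i =>
      by_cases hmatch : ∃ j, (i, j) ∈ θ
      · obtain ⟨j, hj⟩ := hmatch
        obtain ⟨hσi, hxi, hyj, hd⟩ := (hmem (i, j)).1 hj
        have hfil : θ.filter (fun q => q.1 = i) = {(i, j)} := by
          apply Finset.eq_singleton_iff_unique_mem.2
          refine ⟨Finset.mem_filter.2 ⟨hj, rfl⟩, ?_⟩
          intro q hq
          obtain ⟨hqθ, hq1⟩ := Finset.mem_filter.1 hq
          exact hvalid.2 q hqθ (i, j) hj (Or.inl hq1)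
        have hαv : α (inl i) = optDist (X i k) (Y j k) ^ p := by
          rw [hα, Sum.elim_inl, hfil, Finset.sum_singleton, if_neg, add_zero]
          rintro ⟨-, h⟩; exact h j hj
        have hβv : β (σ (inl i)) = 0 := by
          rw [hσi, hβ, Sum.elim_inr, if_neg]
          rintro ⟨-, h⟩; exact h i hj
        rw [hαv, hβv, hσi, add_zero, Cmat_inl_inr, Dmat_castSucc]
        obtain ⟨x, hx⟩ := Option.isSome_iff_exists.1 hxi
        obtain ⟨y, hy⟩ := Option.isSome_iff_exists.1 hyj
        rw [hx, hy] at hd ⊢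
        have : optDist (some x) (some y) = dist x y := rfl
        rw [this] at hd ⊢
        rw [dG_some_some, min_eq_right hd.le]
      · push_neg at hmatch
        have hfil0 : θ.filter (fun q => q.1 = i) = ∅ := by
          refine Finset.filter_eq_empty_iff.2 ?_
          intro q hq h
          have hq2 : (i, q.2) ∈ θ := by rw [← h]; exact hq
          exact hmatch q.2 hq2
        cases hxi : X i k with
        | none =>
          have hαv : α (inl i) = 0 := by
            rw [hα, Sum.elim_inl, hfil0, Finset.sum_empty, if_neg, add_zero]
            rintro ⟨h, -⟩; rw [hxi] at h; simp at h
          rw [hαv, zero_add]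
          cases hσi : σ (inl i) with
          | inl i' =>
            rw [hβ, Sum.elim_inl, Cmat_inl_inl, Dmat_last_right,
              dGp_none c p (E := E) hp _ (by rw [hxi]; simp)]
          | inr j =>
            rw [hβ, Sum.elim_inr, Cmat_inl_inr, Dmat_castSucc]
            by_cases hcond : (Y j k).isSome ∧ ∀ i', (i', j) ∉ θ
            · rw [if_pos hcond, hxi, ← dGp_none_some c p hc.le hp _ hcond.1]
            · rw [if_neg hcond]
              exact Real.rpow_nonneg (dG_nonneg hc _ _) _
        | some x =>
          have hαv : α (inl i) = c ^ p / 2 := by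
            rw [hα, Sum.elim_inl, hfil0, Finset.sum_empty, if_pos, zero_add]
            exact ⟨by rw [hxi]; rfl, hmatch⟩
          rw [hαv]
          cases hσi : σ (inl i) with
          | inl i' =>
            rw [hβ, Sum.elim_inl, add_zero, Cmat_inl_inl, Dmat_last_right,
              dGp_some_none c p hc.le hp _ (by rw [hxi]; rfl)]
          | inr j =>
            rw [hβ, Sum.elim_inr, Cmat_inl_inr, Dmat_castSucc]
            cases hyj : Y j k with
            | none =>
              rw [if_neg (by rintro ⟨h, -⟩; simp at h), add_zero,
                dGp_some_none c p hc.le hp _ (by rw [hxi]; rfl)]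
            | some y =>
              have hunm : ∀ i', (i', j) ∉ θ := by
                intro i' hi'
                have h2 : σ (inl i') = inr j := ((hmem (i', j)).1 hi').1
                have h3 : i' = i := inl.inj (σ.injective (by rw [h2, hσi]))
                exact hmatch j (h3 ▸ hi')
              rw [if_pos ⟨rfl, hunm⟩]
              have hdist : c ≤ dist x y := by
                by_contra hlt
                push_neg at hlt
                refine hmatch j ((hmem (i, j)).2 ⟨hσi, ?_, ?_, ?_⟩)
                · rw [hxi]; rfl
                · rw [hyj]; rfl
                · rw [hxi, hyj]; exact hlt
              rw [hxi, dG_some_some, min_eq_left hdist]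
              have : c ^ p / 2 + c ^ p / 2 = c ^ p := by ring
              rw [this]
    | inr j' =>
      rw [hα, Sum.elim_inr, zero_add]
      cases hσi : σ (inr j') with
      | inl i' => rw [hβ, Sum.elim_inl, Cmat_inr_inl]
      | inr j =>
        rw [hβ, Sum.elim_inr, Cmat_inr_inr, Dmat_last_left]
        by_cases hcond : (Y j k).isSome ∧ ∀ i', (i', j) ∉ θ
        · rw [if_pos hcond, dGp_none_some c p hc.le hp _ hcond.1]
        · rw [if_neg hcond]
          exact Real.rpow_nonneg (dG_nonneg hc _ _) _
  have hsum : ∑ s, (α s + β (σ s)) ≤ ∑ s, Cmat c p X Y k s (σ s) :=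
    Finset.sum_le_sum fun s _ => key s
  rw [Finset.sum_add_distrib, Equiv.sum_comp σ β] at hsum
  refine le_trans ?_ hsum
  -- compute the two sums
  set BX : Finset (Fin nX) :=
    Finset.univ.filter (fun i => (X i k).isSome ∧ ∀ j, (i, j) ∉ θ) with hBX
  set BY : Finset (Fin nY) :=
    Finset.univ.filter (fun j => (Y j k).isSome ∧ ∀ i, (i, j) ∉ θ) with hBY
  have hαsum : ∑ s, α s = (∑ q ∈ θ, optDist (X q.1 k) (Y q.2 k) ^ p) + (BX.card : ℝ) * (c ^ p / 2) := by
    rw [hα, Fintype.sum_sum_type]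
    simp only [Sum.elim_inl, Sum.elim_inr, Finset.sum_const_zero, add_zero]
    rw [Finset.sum_add_distrib]
    congr 1
    · exact Finset.sum_fiberwise_of_maps_to (fun q _ => Finset.mem_univ q.1) _
    · rw [← Finset.sum_filter, Finset.sum_const, nsmul_eq_mul]
  have hβsum : ∑ s, β s = (BY.card : ℝ) * (c ^ p / 2) := by
    rw [hβ, Fintype.sum_sum_type]
    simp only [Sum.elim_inl, Sum.elim_inr, Finset.sum_const_zero, zero_add]
    rw [← Finset.sum_filter, Finset.sum_const, nsmul_eq_mul]
  have hcardX : tauCard X k ≤ θ.card + BX.card := by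
    have hsub : BX ⊆ Finset.univ.filter (fun i => (X i k).isSome) := by
      intro i hi
      simp only [hBX, Finset.mem_filter, Finset.mem_univ, true_and] at hi ⊢
      exact hi.1
    have himg : (Finset.univ.filter (fun i => (X i k).isSome)) \ BX ⊆ θ.image Prod.fst := by
      intro i hi
      obtain ⟨hiA, hiB⟩ := Finset.mem_sdiff.1 hi
      simp only [hBX, Finset.mem_filter, Finset.mem_univ, true_and, not_and, not_forall,
        not_not] at hiB
      simp only [Finset.mem_filter, Finset.mem_univ, true_and] at hiA
      obtain ⟨j, hj⟩ := hiB hiA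
      exact Finset.mem_image.2 ⟨(i, j), hj, rfl⟩
    have h1 := Finset.card_sdiff_add_card_eq_card hsub
    have h2 := Finset.card_le_card himg
    have h3 := Finset.card_image_le (s := θ) (f := Prod.fst)
    have h4 : tauCard X k = (Finset.univ.filter (fun i => (X i k).isSome)).card := rfl
    omega
  have hcardY : tauCard Y k ≤ θ.card + BY.card := by
    have hsub : BY ⊆ Finset.univ.filter (fun j => (Y j k).isSome) := by
      intro j hj
      simp only [hBY, Finset.mem_filter, Finset.mem_univ, true_and] at hj ⊢
      exact hj.1
    have himg : (Finset.univ.filter (fun j => (Y j k).isSome)) \ BY ⊆ θ.image Prod.snd := by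
      intro j hj
      obtain ⟨hjA, hjB⟩ := Finset.mem_sdiff.1 hj
      simp only [hBY, Finset.mem_filter, Finset.mem_univ, true_and, not_and, not_forall,
        not_not] at hjB
      simp only [Finset.mem_filter, Finset.mem_univ, true_and] at hjA
      obtain ⟨i, hi⟩ := hjB hjA
      exact Finset.mem_image.2 ⟨(i, j), hi, rfl⟩
    have h1 := Finset.card_sdiff_add_card_eq_card hsub
    have h2 := Finset.card_le_card himg
    have h3 := Finset.card_image_le (s := θ) (f := Prod.snd)
    have h4 : tauCard Y k = (Finset.univ.filter (fun j => (Y j k).isSome)).card := rfl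
    omega
  rw [hαsum, hβsum]
  have hX' : (tauCard X k : ℝ) ≤ (θ.card : ℝ) + (BX.card : ℝ) := by exact_mod_cast hcardX
  have hY' : (tauCard Y k : ℝ) ≤ (θ.card : ℝ) + (BY.card : ℝ) := by exact_mod_cast hcardY
  unfold thetaCost
  nlinarith

end AuxCore
section AuxBirkhoff

open Sum

variable {E : Type*} [MetricSpace E] {T nX nY : ℕ}

/-- Extension of a relaxed assignment matrix to a doubly stochastic matrix on
`Fin nX ⊕ Fin nY`. -/
def Mfill {nX nY : ℕ} (W : Matrix (Fin (nX + 1)) (Fin (nY + 1)) ℝ) :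
    Matrix (Fin nX ⊕ Fin nY) (Fin nX ⊕ Fin nY) ℝ :=
  Matrix.fromBlocks
    (Matrix.of fun i i' => if i = i' then W i.castSucc (Fin.last nY) else 0)
    (Matrix.of fun i j => W i.castSucc j.castSucc)
    (Matrix.of fun j i' => if (∑ j' : Fin nY, (1 - W (Fin.last nX) j'.castSucc)) = 0 then 0
      else (1 - W (Fin.last nX) j.castSucc) * (1 - W i'.castSucc (Fin.last nY)) /
        (∑ j' : Fin nY, (1 - W (Fin.last nX) j'.castSucc)))
    (Matrix.of fun j j' => if j = j' then W (Fin.last nX) j.castSucc else 0)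

lemma Mfill_mem_doublyStochastic {nX nY : ℕ} {W : Matrix (Fin (nX + 1)) (Fin (nY + 1)) ℝ}
    (hW : Relaxed W) : Mfill W ∈ doublyStochastic ℝ (Fin nX ⊕ Fin nY) := by
  obtain ⟨hnn, hcol, hrow, hcorner⟩ := hW
  set r : Fin nY → ℝ := fun j => 1 - W (Fin.last nX) j.castSucc with hrdef
  set s0 : Fin nX → ℝ := fun i => 1 - W i.castSucc (Fin.last nY) with hsdef
  have hr : ∀ j, 0 ≤ r j := by
    intro j
    have : W (Fin.last nX) j.castSucc ≤ 1 := by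
      rw [← hcol j]
      exact Finset.single_le_sum (fun i _ => hnn i _) (Finset.mem_univ _)
    simp [hrdef]; linarith
  have hs : ∀ i, 0 ≤ s0 i := by
    intro i
    have : W i.castSucc (Fin.last nY) ≤ 1 := by
      rw [← hrow i]
      exact Finset.single_le_sum (fun j _ => hnn _ j) (Finset.mem_univ _)
    simp [hsdef]; linarith
  have hdouble : (nX : ℝ) + ∑ j : Fin nY, W (Fin.last nX) j.castSucc
      = (nY : ℝ) + ∑ i : Fin nX, W i.castSucc (Fin.last nY) := by
    have h1 : ∑ i : Fin (nX + 1), ∑ j : Fin (nY + 1), W i j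
        = (nX : ℝ) + (∑ j : Fin nY, W (Fin.last nX) j.castSucc) := by
      rw [Fin.sum_univ_castSucc (f := fun i => ∑ j, W i j)]
      rw [Fin.sum_univ_castSucc (f := fun j => W (Fin.last nX) j), hcorner, add_zero]
      simp [hrow]
    have h2 : ∑ i : Fin (nX + 1), ∑ j : Fin (nY + 1), W i j
        = (nY : ℝ) + (∑ i : Fin nX, W i.castSucc (Fin.last nY)) := by
      rw [show ∑ i : Fin (nX + 1), ∑ j : Fin (nY + 1), W i j = ∑ j : Fin (nY + 1), ∑ i : Fin (nX + 1), W i j from Finset.sum_comm]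
      rw [Fin.sum_univ_castSucc (f := fun j => ∑ i, W i j)]
      rw [Fin.sum_univ_castSucc (f := fun i => W i (Fin.last nY)), hcorner, add_zero]
      simp [hcol]
    linarith
  have hTots : ∑ i, s0 i = ∑ j, r j := by
    simp only [hrdef, hsdef, Finset.sum_sub_distrib, Finset.sum_const, Finset.card_univ,
      Fintype.card_fin, nsmul_eq_mul, mul_one]
    linarith
  have hTnn : 0 ≤ ∑ j, r j := Finset.sum_nonneg fun j _ => hr j
  rw [mem_doublyStochastic_iff_sum]
  refine ⟨?_, ?_, ?_⟩
  · rintro (i | j) (i' | j') <;>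
      simp only [Mfill, Matrix.fromBlocks_apply₁₁, Matrix.fromBlocks_apply₁₂,
        Matrix.fromBlocks_apply₂₁, Matrix.fromBlocks_apply₂₂, Matrix.of_apply]
    · split
      · exact hnn _ _
      · exact le_rfl
    · exact hnn _ _
    · split
      · exact le_rfl
      · rename_i hT
        have hTpos : 0 < ∑ j' : Fin nY, (1 - W (Fin.last nX) j'.castSucc) :=
          lt_of_le_of_ne (by simpa [hrdef] using hTnn) (Ne.symm hT)
        have := hr j
        have := hs i'
        simp only [hrdef, hsdef] at *
        positivity
    · split
      · exact hnn _ _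
      · exact le_rfl
  · rintro (i | j)
    · rw [Fintype.sum_sum_type]
      simp only [Mfill, Matrix.fromBlocks_apply₁₁, Matrix.fromBlocks_apply₁₂, Matrix.of_apply]
      rw [Finset.sum_ite_eq, if_pos (Finset.mem_univ i), add_comm, ← Fin.sum_univ_castSucc]
      exact hrow i
    · rw [Fintype.sum_sum_type]
      simp only [Mfill, Matrix.fromBlocks_apply₂₁, Matrix.fromBlocks_apply₂₂, Matrix.of_apply]
      rw [Finset.sum_ite_eq, if_pos (Finset.mem_univ j)]
      by_cases hT : (∑ j' : Fin nY, (1 - W (Fin.last nX) j'.castSucc)) = 0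
      · rw [Finset.sum_congr rfl (fun i' _ => if_pos hT), Finset.sum_const_zero, zero_add]
        have hrj : r j = 0 := by
          have := (Finset.sum_eq_zero_iff_of_nonneg (fun j' _ => hr j')).1
            (by simpa [hrdef] using hT) j (Finset.mem_univ j)
          exact this
        simp only [hrdef] at hrj
        linarith
      · rw [Finset.sum_congr rfl (fun i' _ => if_neg hT)]
        have : ∑ i' : Fin nX, (1 - W (Fin.last nX) j.castSucc) * (1 - W i'.castSucc (Fin.last nY)) /
            (∑ j' : Fin nY, (1 - W (Fin.last nX) j'.castSucc))
            = (1 - W (Fin.last nX) j.castSucc) := by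
          rw [← Finset.sum_div, ← Finset.mul_sum]
          have h5 : ∑ i' : Fin nX, (1 - W i'.castSucc (Fin.last nY))
              = ∑ j' : Fin nY, (1 - W (Fin.last nX) j'.castSucc) := by
            simpa [hrdef, hsdef] using hTots
          rw [h5, mul_div_assoc, div_self hT, mul_one]
        rw [this]
        ring
  · rintro (i' | j)
    · rw [Fintype.sum_sum_type]
      simp only [Mfill, Matrix.fromBlocks_apply₁₁, Matrix.fromBlocks_apply₂₁, Matrix.of_apply]
      rw [Finset.sum_ite_eq', if_pos (Finset.mem_univ i')]
      by_cases hT : (∑ j' : Fin nY, (1 - W (Fin.last nX) j'.castSucc)) = 0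
      · rw [Finset.sum_congr rfl (fun j _ => if_pos hT), Finset.sum_const_zero, add_zero]
        have hsi : s0 i' = 0 := by
          have h0 : ∑ i, s0 i = 0 := by rw [hTots]; simpa [hrdef] using hT
          exact (Finset.sum_eq_zero_iff_of_nonneg (fun i _ => hs i)).1 h0 i' (Finset.mem_univ i')
        simp only [hsdef] at hsi
        linarith
      · rw [Finset.sum_congr rfl (fun j _ => if_neg hT)]
        have : ∑ j : Fin nY, (1 - W (Fin.last nX) j.castSucc) * (1 - W i'.castSucc (Fin.last nY)) /
            (∑ j' : Fin nY, (1 - W (Fin.last nX) j'.castSucc))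
            = (1 - W i'.castSucc (Fin.last nY)) := by
          rw [← Finset.sum_div, ← Finset.sum_mul, mul_comm, mul_div_assoc, div_self hT, mul_one]
        rw [this]
        ring
    · rw [Fintype.sum_sum_type]
      simp only [Mfill, Matrix.fromBlocks_apply₁₂, Matrix.fromBlocks_apply₂₂, Matrix.of_apply]
      rw [Finset.sum_ite_eq', if_pos (Finset.mem_univ j),
        ← Fin.sum_univ_castSucc (f := fun i => W i j.castSucc)]
      exact hcol j

end AuxBirkhoff
section AuxCore2

open Sum

variable {E : Type*} [MetricSpace E] {T nX nY : ℕ}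
variable (c p : ℝ) (X : Fin nX → Fin T → Option E) (Y : Fin nY → Fin T → Option E) (k : Fin T)

lemma permMatrix_mul_sum (σ : Equiv.Perm (Fin nX ⊕ Fin nY)) (a : Fin nX ⊕ Fin nY) :
    ∑ b, Cmat c p X Y k a b * σ.permMatrix ℝ a b = Cmat c p X Y k a (σ a) := by
  rw [Finset.sum_eq_single (σ a)]
  · simp [Equiv.Perm.permMatrix, PEquiv.toMatrix_apply, Equiv.toPEquiv_apply]
  · intro b _ hb
    simp [Equiv.Perm.permMatrix, PEquiv.toMatrix_apply, Equiv.toPEquiv_apply, Ne.symm hb]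
  · intro h
    exact absurd (Finset.mem_univ _) h

lemma fM_eq {W : Matrix (Fin (nX + 1)) (Fin (nY + 1)) ℝ} (hW : Relaxed W) :
    ∑ a, ∑ b, Cmat c p X Y k a b * Mfill W a b = ∑ i, ∑ j, Dmat c p X Y k i j * W i j := by
  obtain ⟨hnn, hcol, hrow, hcorner⟩ := hW
  rw [Fintype.sum_sum_type]
  have hrow1 : ∀ i : Fin nX, ∑ b, Cmat c p X Y k (inl i) b * Mfill W (inl i) b
      = Dmat c p X Y k i.castSucc (Fin.last nY) * W i.castSucc (Fin.last nY)
        + ∑ j : Fin nY, Dmat c p X Y k i.castSucc j.castSucc * W i.castSucc j.castSucc := by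
    intro i
    rw [Fintype.sum_sum_type]
    congr 1
    · have : ∀ i' : Fin nX, Cmat c p X Y k (inl i) (inl i') * Mfill W (inl i) (inl i')
          = if i = i' then Dmat c p X Y k i.castSucc (Fin.last nY) * W i.castSucc (Fin.last nY)
            else 0 := by
        intro i'
        rw [Cmat_inl_inl]
        simp only [Mfill, Matrix.fromBlocks_apply₁₁, Matrix.of_apply, mul_ite, mul_zero]
      rw [Finset.sum_congr rfl (fun i' _ => this i'), Finset.sum_ite_eq,
        if_pos (Finset.mem_univ i)]
  have hrow2 : ∀ j : Fin nY, ∑ b, Cmat c p X Y k (inr j) b * Mfill W (inr j) b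
      = Dmat c p X Y k (Fin.last nX) j.castSucc * W (Fin.last nX) j.castSucc := by
    intro j
    rw [Fintype.sum_sum_type]
    have h1 : ∀ i' : Fin nX, Cmat c p X Y k (inr j) (inl i') * Mfill W (inr j) (inl i') = 0 := by
      intro i'
      rw [Cmat_inr_inl, zero_mul]
    have h2 : ∀ j' : Fin nY, Cmat c p X Y k (inr j) (inr j') * Mfill W (inr j) (inr j')
        = if j = j' then Dmat c p X Y k (Fin.last nX) j'.castSucc * W (Fin.last nX) j.castSucc
          else 0 := by
      intro j'
      rw [Cmat_inr_inr]
      simp only [Mfill, Matrix.fromBlocks_apply₂₂, Matrix.of_apply, mul_ite, mul_zero]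
    rw [Finset.sum_congr rfl (fun i' _ => h1 i'), Finset.sum_congr rfl (fun j' _ => h2 j'),
      Finset.sum_const_zero, zero_add, Finset.sum_ite_eq, if_pos (Finset.mem_univ j)]
  rw [Finset.sum_congr rfl (fun i _ => hrow1 i), Finset.sum_congr rfl (fun j _ => hrow2 j)]
  rw [Fin.sum_univ_castSucc (f := fun i => ∑ j, Dmat c p X Y k i j * W i j)]
  have hinner : ∀ i : Fin nX, ∑ j : Fin (nY + 1), Dmat c p X Y k i.castSucc j * W i.castSucc j
      = ∑ j : Fin nY, Dmat c p X Y k i.castSucc j.castSucc * W i.castSucc j.castSucc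
        + Dmat c p X Y k i.castSucc (Fin.last nY) * W i.castSucc (Fin.last nY) :=
    fun i => Fin.sum_univ_castSucc (f := fun j => Dmat c p X Y k i.castSucc j * W i.castSucc j)
  have hlast : ∑ j : Fin (nY + 1), Dmat c p X Y k (Fin.last nX) j * W (Fin.last nX) j
      = ∑ j : Fin nY, Dmat c p X Y k (Fin.last nX) j.castSucc * W (Fin.last nX) j.castSucc := by
    rw [Fin.sum_univ_castSucc (f := fun j => Dmat c p X Y k (Fin.last nX) j * W (Fin.last nX) j),
      hcorner, mul_zero, add_zero]
  rw [Finset.sum_congr rfl (fun i _ => hinner i), hlast]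
  simp only [Finset.sum_add_distrib]
  ring

lemma gospaP_le_relaxed (hc : 0 < c) (hp : 1 ≤ p) {W : Matrix (Fin (nX + 1)) (Fin (nY + 1)) ℝ}
    (hW : Relaxed W) :
    gospaP c p X Y k ≤ ∑ i, ∑ j, Dmat c p X Y k i j * W i j := by
  obtain ⟨w, hw0, hw1, hwM⟩ :=
    exists_eq_sum_perm_of_mem_doublyStochastic (Mfill_mem_doublyStochastic hW)
  have hMab : ∀ a b, Mfill W a b = ∑ σ : Equiv.Perm (Fin nX ⊕ Fin nY),
      w σ * σ.permMatrix ℝ a b := by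
    intro a b
    rw [← hwM]
    simp [Matrix.sum_apply]
  have hfM : ∑ a, ∑ b, Cmat c p X Y k a b * Mfill W a b
      = ∑ σ : Equiv.Perm (Fin nX ⊕ Fin nY), w σ * ∑ s, Cmat c p X Y k s (σ s) := by
    calc ∑ a, ∑ b, Cmat c p X Y k a b * Mfill W a b
        = ∑ a, ∑ b, ∑ σ : Equiv.Perm (Fin nX ⊕ Fin nY),
            w σ * (Cmat c p X Y k a b * σ.permMatrix ℝ a b) := by
          refine Finset.sum_congr rfl fun a _ => Finset.sum_congr rfl fun b _ => ?_
          rw [hMab, Finset.mul_sum]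
          exact Finset.sum_congr rfl fun σ _ => by ring
      _ = ∑ σ : Equiv.Perm (Fin nX ⊕ Fin nY), ∑ a, ∑ b,
            w σ * (Cmat c p X Y k a b * σ.permMatrix ℝ a b) := by
          rw [Finset.sum_congr rfl fun a _ => Finset.sum_comm, Finset.sum_comm]
      _ = ∑ σ : Equiv.Perm (Fin nX ⊕ Fin nY), w σ * ∑ s, Cmat c p X Y k s (σ s) := by
          refine Finset.sum_congr rfl fun σ _ => ?_
          rw [Finset.sum_congr rfl fun a (_ : a ∈ Finset.univ) => (Finset.mul_sum _ _ _).symm,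
            ← Finset.mul_sum]
          congr 1
          exact Finset.sum_congr rfl fun a _ => permMatrix_mul_sum c p X Y k σ a
  calc gospaP c p X Y k
      = ∑ σ : Equiv.Perm (Fin nX ⊕ Fin nY), w σ * gospaP c p X Y k := by
        rw [← Finset.sum_mul, hw1, one_mul]
    _ ≤ ∑ σ : Equiv.Perm (Fin nX ⊕ Fin nY), w σ * ∑ s, Cmat c p X Y k s (σ s) :=
        Finset.sum_le_sum fun σ _ =>
          mul_le_mul_of_nonneg_left (gospaP_le_perm_sum c p X Y k hc hp σ) (hw0 σ)
    _ = ∑ a, ∑ b, Cmat c p X Y k a b * Mfill W a b := hfM.symm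
    _ = ∑ i, ∑ j, Dmat c p X Y k i j * W i j := fM_eq c p X Y k hW

end AuxCore2
section AuxUpper

variable {E : Type*} [MetricSpace E] {T nX nY : ℕ}

open Classical in
/-- The binary assignment matrix associated with an assignment set. -/
def Wtheta {nX nY : ℕ} (θ : Finset (Fin nX × Fin nY)) :
    Matrix (Fin (nX + 1)) (Fin (nY + 1)) ℝ :=
  fun i j =>
    if h : (i : ℕ) < nX then
      if h' : (j : ℕ) < nY then (if (⟨i, h⟩, (⟨j, h'⟩ : Fin nY)) ∈ θ then 1 else 0)
      else (if ∀ j', ((⟨i, h⟩ : Fin nX), j') ∉ θ then 1 else 0)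
    else
      if h' : (j : ℕ) < nY then (if ∀ i', (i', (⟨j, h'⟩ : Fin nY)) ∉ θ then 1 else 0)
      else 0

lemma Wtheta_cast_cast {nX nY : ℕ} (θ : Finset (Fin nX × Fin nY)) (i : Fin nX) (j : Fin nY)
    [Decidable ((i, j) ∈ θ)] :
    Wtheta θ i.castSucc j.castSucc = if (i, j) ∈ θ then 1 else 0 := by
  simp only [Wtheta, Fin.coe_castSucc, i.isLt, j.isLt, dif_pos, Fin.eta]
  congr

lemma Wtheta_cast_last {nX nY : ℕ} (θ : Finset (Fin nX × Fin nY)) (i : Fin nX)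
    [Decidable (∀ j', (i, j') ∉ θ)] :
    Wtheta θ i.castSucc (Fin.last nY) = if ∀ j', (i, j') ∉ θ then 1 else 0 := by
  simp only [Wtheta, Fin.coe_castSucc, i.isLt, dif_pos, Fin.val_last, lt_self_iff_false,
    dif_neg, not_false_iff, Fin.eta]
  congr

lemma Wtheta_last_cast {nX nY : ℕ} (θ : Finset (Fin nX × Fin nY)) (j : Fin nY)
    [Decidable (∀ i', (i', j) ∉ θ)] :
    Wtheta θ (Fin.last nX) j.castSucc = if ∀ i', (i', j) ∉ θ then 1 else 0 := by
  simp only [Wtheta, Fin.val_last, lt_self_iff_false, dif_neg, not_false_iff,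
    Fin.coe_castSucc, j.isLt, dif_pos, Fin.eta]
  congr

lemma Wtheta_last_last {nX nY : ℕ} (θ : Finset (Fin nX × Fin nY)) :
    Wtheta θ (Fin.last nX) (Fin.last nY) = 0 := by
  simp [Wtheta]

variable (X : Fin nX → Fin T → Option E) (Y : Fin nY → Fin T → Option E) (k : Fin T)

lemma sum_indicator_row {θ : Finset (Fin nX × Fin nY)} (hθ : ValidTheta X Y k θ) (i : Fin nX) :
    (∑ j : Fin nY, Wtheta θ i.castSucc j.castSucc)
      + Wtheta θ i.castSucc (Fin.last nY) = 1 := by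
  classical
  rw [Finset.sum_congr rfl (fun j _ => Wtheta_cast_cast θ i j), Wtheta_cast_last θ i]
  by_cases hm : ∃ j, (i, j) ∈ θ
  · obtain ⟨j0, hj0⟩ := hm
    have hfil : Finset.univ.filter (fun j => (i, j) ∈ θ) = {j0} := by
      apply Finset.eq_singleton_iff_unique_mem.2
      refine ⟨Finset.mem_filter.2 ⟨Finset.mem_univ _, hj0⟩, fun j hj => ?_⟩
      have := hθ.2 (i, j) (Finset.mem_filter.1 hj).2 (i, j0) hj0 (Or.inl rfl)
      exact (Prod.ext_iff.1 this).2
    rw [← Finset.sum_filter, hfil, Finset.sum_singleton, if_neg (fun h => h j0 hj0)]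
    norm_num
  · push_neg at hm
    rw [Finset.sum_eq_zero (fun j _ => if_neg (hm j)), if_pos hm]
    norm_num

lemma sum_indicator_col {θ : Finset (Fin nX × Fin nY)} (hθ : ValidTheta X Y k θ) (j : Fin nY) :
    (∑ i : Fin nX, Wtheta θ i.castSucc j.castSucc)
      + Wtheta θ (Fin.last nX) j.castSucc = 1 := by
  classical
  rw [Finset.sum_congr rfl (fun i _ => Wtheta_cast_cast θ i j), Wtheta_last_cast θ j]
  by_cases hm : ∃ i, (i, j) ∈ θ
  · obtain ⟨i0, hi0⟩ := hm
    have hfil : Finset.univ.filter (fun i => (i, j) ∈ θ) = {i0} := by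
      apply Finset.eq_singleton_iff_unique_mem.2
      refine ⟨Finset.mem_filter.2 ⟨Finset.mem_univ _, hi0⟩, fun i hi => ?_⟩
      have := hθ.2 (i, j) (Finset.mem_filter.1 hi).2 (i0, j) hi0 (Or.inr rfl)
      exact (Prod.ext_iff.1 this).1
    rw [← Finset.sum_filter, hfil, Finset.sum_singleton, if_neg (fun h => h i0 hi0)]
    norm_num
  · push_neg at hm
    rw [Finset.sum_eq_zero (fun i _ => if_neg (hm i)), if_pos hm]
    norm_num

lemma Wtheta_relaxed {θ : Finset (Fin nX × Fin nY)} (hθ : ValidTheta X Y k θ) :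
    Relaxed (Wtheta θ) := by
  classical
  refine ⟨?_, ?_, ?_, Wtheta_last_last θ⟩
  · intro i j
    unfold Wtheta
    repeat' split
    all_goals norm_num
  · intro j
    rw [Fin.sum_univ_castSucc (f := fun i => Wtheta θ i j.castSucc)]
    exact sum_indicator_col X Y k hθ j
  · intro i
    rw [Fin.sum_univ_castSucc (f := fun j => Wtheta θ i.castSucc j)]
    exact sum_indicator_row X Y k hθ i

lemma Wtheta_cost_le (c p : ℝ) (hc : 0 < c) (hp : 1 ≤ p) {θ : Finset (Fin nX × Fin nY)}
    (hθ : ValidTheta X Y k θ) :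
    ∑ i, ∑ j, Dmat c p X Y k i j * Wtheta θ i j ≤ thetaCost X Y k c p θ := by
  classical
  have hp0 : (0:ℝ) ≤ p := by linarith
  rw [Fin.sum_univ_castSucc (f := fun i => ∑ j, Dmat c p X Y k i j * Wtheta θ i j)]
  have hinner : ∀ i : Fin nX,
      ∑ j : Fin (nY + 1), Dmat c p X Y k i.castSucc j * Wtheta θ i.castSucc j
      = (∑ j : Fin nY, Dmat c p X Y k i.castSucc j.castSucc * Wtheta θ i.castSucc j.castSucc)
        + Dmat c p X Y k i.castSucc (Fin.last nY) * Wtheta θ i.castSucc (Fin.last nY) :=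
    fun i => Fin.sum_univ_castSucc
      (f := fun j => Dmat c p X Y k i.castSucc j * Wtheta θ i.castSucc j)
  have hlastrow : ∑ j : Fin (nY + 1), Dmat c p X Y k (Fin.last nX) j * Wtheta θ (Fin.last nX) j
      = ∑ j : Fin nY, Dmat c p X Y k (Fin.last nX) j.castSucc
          * Wtheta θ (Fin.last nX) j.castSucc := by
    rw [Fin.sum_univ_castSucc
      (f := fun j => Dmat c p X Y k (Fin.last nX) j * Wtheta θ (Fin.last nX) j),
      Wtheta_last_last, mul_zero, add_zero]
  rw [Finset.sum_congr rfl fun i _ => hinner i, hlastrow, Finset.sum_add_distrib]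
  have hT1 : ∑ i : Fin nX, ∑ j : Fin nY,
      Dmat c p X Y k i.castSucc j.castSucc * Wtheta θ i.castSucc j.castSucc
      ≤ ∑ q ∈ θ, optDist (X q.1 k) (Y q.2 k) ^ p := by
    have e1 : ∀ (i : Fin nX) (j : Fin nY),
        Dmat c p X Y k i.castSucc j.castSucc * Wtheta θ i.castSucc j.castSucc
        = if (i, j) ∈ θ then Dmat c p X Y k i.castSucc j.castSucc else 0 := by
      intro i j
      rw [Wtheta_cast_cast, mul_ite, mul_one, mul_zero]
    rw [Finset.sum_congr rfl fun i _ => Finset.sum_congr rfl fun j _ => e1 i j]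
    rw [← Finset.sum_product'
      (f := fun i j => if (i, j) ∈ θ then Dmat c p X Y k i.castSucc j.castSucc else 0)]
    have e2 : ∀ q ∈ Finset.univ ×ˢ Finset.univ,
        (if (q.1, q.2) ∈ θ then Dmat c p X Y k q.1.castSucc q.2.castSucc else 0)
        = if q ∈ θ then Dmat c p X Y k q.1.castSucc q.2.castSucc else 0 := by
      intro q _
      rw [Prod.mk.eta]
    rw [Finset.sum_congr rfl e2, Finset.sum_ite_mem, Finset.univ_product_univ,
      Finset.univ_inter]
    refine Finset.sum_le_sum fun q hq => ?_
    obtain ⟨hx, hy⟩ := hθ.1 q hq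
    obtain ⟨x, hx⟩ := Option.ne_none_iff_exists'.1 hx
    obtain ⟨y, hy⟩ := Option.ne_none_iff_exists'.1 hy
    rw [Dmat_castSucc, hx, hy, dG_some_some]
    have : optDist (some x) (some y) = dist x y := rfl
    rw [this]
    exact Real.rpow_le_rpow (le_min hc.le dist_nonneg) (min_le_right _ _) hp0
  have hT2 : ∑ i : Fin nX,
      Dmat c p X Y k i.castSucc (Fin.last nY) * Wtheta θ i.castSucc (Fin.last nY)
      = c ^ p / 2 * ((tauCard X k : ℝ) - θ.card) := by
    have e2 : ∀ i : Fin nX,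
        Dmat c p X Y k i.castSucc (Fin.last nY) * Wtheta θ i.castSucc (Fin.last nY)
        = if (X i k).isSome ∧ ∀ j', (i, j') ∉ θ then c ^ p / 2 else 0 := by
      intro i
      rw [Dmat_last_right, Wtheta_cast_last]
      by_cases h1 : (X i k).isSome
      · rw [dGp_some_none c p hc.le hp _ h1]
        by_cases h2 : ∀ j', (i, j') ∉ θ
        · rw [if_pos h2, if_pos ⟨h1, h2⟩, mul_one]
        · rw [if_neg h2, if_neg (fun h => h2 h.2), mul_zero]
      · rw [dGp_none c p hp _ h1, zero_mul, if_neg (fun h => h1 h.1)]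
    rw [Finset.sum_congr rfl fun i _ => e2 i, ← Finset.sum_filter, Finset.sum_const,
      nsmul_eq_mul]
    have hsub : (Finset.univ.filter (fun i => (X i k).isSome ∧ ∀ j', (i, j') ∉ θ))
        ⊆ Finset.univ.filter (fun i => (X i k).isSome) := by
      intro i hi
      simp only [Finset.mem_filter, Finset.mem_univ, true_and] at hi ⊢
      exact hi.1
    have himg : (Finset.univ.filter (fun i => (X i k).isSome))
        \ (Finset.univ.filter (fun i => (X i k).isSome ∧ ∀ j', (i, j') ∉ θ))
        = θ.image Prod.fst := by
      ext i
      simp only [Finset.mem_sdiff, Finset.mem_filter, Finset.mem_univ, true_and, not_and,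
        not_forall, not_not, Finset.mem_image]
      constructor
      · rintro ⟨h1, h2⟩
        obtain ⟨j, hj⟩ := h2 h1
        exact ⟨(i, j), hj, rfl⟩
      · rintro ⟨q, hq, rfl⟩
        refine ⟨Option.ne_none_iff_isSome.1 (hθ.1 q hq).1, fun _ => ⟨q.2, ?_⟩⟩
        rw [Prod.mk.eta]
        exact hq
    have hcardimg : (θ.image Prod.fst).card = θ.card :=
      Finset.card_image_of_injOn fun q hq q' hq' h => hθ.2 q hq q' hq' (Or.inl h)
    have h5 := Finset.card_sdiff_add_card_eq_card hsub
    rw [himg, hcardimg] at h5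
    have h6 : tauCard X k = (Finset.univ.filter (fun i => (X i k).isSome)).card := rfl
    have h7 : ((Finset.univ.filter (fun i => (X i k).isSome ∧ ∀ j', (i, j') ∉ θ)).card : ℝ)
        = (tauCard X k : ℝ) - θ.card := by
      rw [h6]
      rw [← h5]
      push_cast
      ring
    rw [h7]
    ring
  have hT3 : ∑ j : Fin nY,
      Dmat c p X Y k (Fin.last nX) j.castSucc * Wtheta θ (Fin.last nX) j.castSucc
      = c ^ p / 2 * ((tauCard Y k : ℝ) - θ.card) := by
    have e2 : ∀ j : Fin nY,
        Dmat c p X Y k (Fin.last nX) j.castSucc * Wtheta θ (Fin.last nX) j.castSucc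
        = if (Y j k).isSome ∧ ∀ i', (i', j) ∉ θ then c ^ p / 2 else 0 := by
      intro j
      rw [Dmat_last_left, Wtheta_last_cast]
      by_cases h1 : (Y j k).isSome
      · rw [dGp_none_some c p hc.le hp _ h1]
        by_cases h2 : ∀ i', (i', j) ∉ θ
        · rw [if_pos h2, if_pos ⟨h1, h2⟩, mul_one]
        · rw [if_neg h2, if_neg (fun h => h2 h.2), mul_zero]
      · have : dG c p none (Y j k) ^ p = 0 := by
          rw [Option.not_isSome_iff_eq_none] at h1
          rw [h1, dG_none_none, Real.zero_rpow (by intro h; rw [h] at hp; linarith)]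
        rw [this, zero_mul, if_neg (fun h => h1 h.1)]
    rw [Finset.sum_congr rfl fun j _ => e2 j, ← Finset.sum_filter, Finset.sum_const,
      nsmul_eq_mul]
    have hsub : (Finset.univ.filter (fun j => (Y j k).isSome ∧ ∀ i', (i', j) ∉ θ))
        ⊆ Finset.univ.filter (fun j => (Y j k).isSome) := by
      intro j hj
      simp only [Finset.mem_filter, Finset.mem_univ, true_and] at hj ⊢
      exact hj.1
    have himg : (Finset.univ.filter (fun j => (Y j k).isSome))
        \ (Finset.univ.filter (fun j => (Y j k).isSome ∧ ∀ i', (i', j) ∉ θ))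
        = θ.image Prod.snd := by
      ext j
      simp only [Finset.mem_sdiff, Finset.mem_filter, Finset.mem_univ, true_and, not_and,
        not_forall, not_not, Finset.mem_image]
      constructor
      · rintro ⟨h1, h2⟩
        obtain ⟨i, hi⟩ := h2 h1
        exact ⟨(i, j), hi, rfl⟩
      · rintro ⟨q, hq, rfl⟩
        refine ⟨Option.ne_none_iff_isSome.1 (hθ.1 q hq).2, fun _ => ⟨q.1, ?_⟩⟩
        rw [Prod.mk.eta]
        exact hq
    have hcardimg : (θ.image Prod.snd).card = θ.card :=
      Finset.card_image_of_injOn fun q hq q' hq' h => hθ.2 q hq q' hq' (Or.inr h)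
    have h5 := Finset.card_sdiff_add_card_eq_card hsub
    rw [himg, hcardimg] at h5
    have h6 : tauCard Y k = (Finset.univ.filter (fun j => (Y j k).isSome)).card := rfl
    have h7 : ((Finset.univ.filter (fun j => (Y j k).isSome ∧ ∀ i', (i', j) ∉ θ)).card : ℝ)
        = (tauCard Y k : ℝ) - θ.card := by
      rw [h6, ← h5]
      push_cast
      ring
    rw [h7]
    ring
  rw [hT2, hT3]
  unfold thetaCost
  linarith

end AuxUpper
open Filter Topology in
/-- As the switching penalty `γ` tends to `0` from above, the time-weighted LP trajectory
metric tends to `d^0`, the `p`-th root of the time-weighted sum of GOSPA costs to the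
`p`-th power. -/
theorem dbar_tendsto_d0 {E : Type*} [MetricSpace E] {T nX nY : ℕ}
    (c p : ℝ) (hc : 0 < c) (hp : 1 ≤ p)
    (w1 w2 : ℕ → ℝ) (hw1 : ∀ k < T, 0 < w1 k) (hw2 : ∀ k < T - 1, 0 < w2 k)
    (X : Fin nX → Fin T → Option E) (Y : Fin nY → Fin T → Option E) :
    Tendsto (fun γ : ℝ => dbar c p γ w1 w2 X Y) (𝓝[>] 0) (𝓝 (d0 c p w1 X Y)) := by
  classical
  have hp0 : (0:ℝ) < p := by linarith
  have hp0' : p ≠ 0 := ne_of_gt hp0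
  choose θopt hθvalid hθeq using fun k : Fin T => exists_optimal_theta X Y k c p
  set Wst : Fin T → Matrix (Fin (nX + 1)) (Fin (nY + 1)) ℝ := fun k => Wtheta (θopt k)
    with hWstdef
  have hWstRel : ∀ k, Relaxed (Wst k) := fun k => Wtheta_relaxed X Y k (hθvalid k)
  haveI hne : Nonempty {W : Fin T → Matrix (Fin (nX + 1)) (Fin (nY + 1)) ℝ //
      ∀ k, Relaxed (W k)} := ⟨⟨Wst, hWstRel⟩⟩
  set B : ℝ := ∑ k : Fin T, w1 k.1 * gospaP c p X Y k with hBdef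
  have hw1nn : ∀ k : Fin T, 0 ≤ w1 k.1 := fun k => (hw1 k.1 k.2).le
  have hBnn : 0 ≤ B :=
    Finset.sum_nonneg fun k _ => mul_nonneg (hw1nn k) (gospaP_nonneg X Y k hc.le)
  set sw : (Fin T → Matrix (Fin (nX + 1)) (Fin (nY + 1)) ℝ) → ℝ := fun W =>
    ∑ k : Fin (T - 1), w2 k.1 * ∑ i : Fin nX, ∑ j : Fin nY,
      |W ⟨k.1, by have := k.2; omega⟩ i.castSucc j.castSucc -
        W ⟨k.1 + 1, by have := k.2; omega⟩ i.castSucc j.castSucc| with hswdef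
  set lp : (Fin T → Matrix (Fin (nX + 1)) (Fin (nY + 1)) ℝ) → ℝ := fun W =>
    ∑ k : Fin T, w1 k.1 * ∑ i, ∑ j, Dmat c p X Y k i j * W k i j with hlpdef
  have hobj : ∀ (γ : ℝ) (W : Fin T → Matrix (Fin (nX + 1)) (Fin (nY + 1)) ℝ),
      obj c p γ w1 w2 X Y W = (lp W + γ ^ p / 2 * sw W) ^ (1 / p) := fun γ W => rfl
  have hswnn : ∀ W, 0 ≤ sw W := by
    intro W
    rw [hswdef]
    exact Finset.sum_nonneg fun k _ => mul_nonneg (hw2 k.1 k.2).le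
      (Finset.sum_nonneg fun i _ => Finset.sum_nonneg fun j _ => abs_nonneg _)
  have hlpnn : ∀ W, (∀ k, Relaxed (W k)) → 0 ≤ lp W := by
    intro W hW
    rw [hlpdef]
    refine Finset.sum_nonneg fun k _ => mul_nonneg (hw1nn k) ?_
    refine Finset.sum_nonneg fun i _ => Finset.sum_nonneg fun j _ => mul_nonneg ?_ ((hW k).1 i j)
    exact Real.rpow_nonneg (dG_nonneg hc _ _) _
  have hlpB : ∀ W, (∀ k, Relaxed (W k)) → B ≤ lp W := by
    intro W hW
    rw [hlpdef, hBdef]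
    exact Finset.sum_le_sum fun k _ => mul_le_mul_of_nonneg_left
      (gospaP_le_relaxed c p X Y k hc hp (hW k)) (hw1nn k)
  have hAB : lp Wst ≤ B := by
    rw [hlpdef, hBdef]
    refine Finset.sum_le_sum fun k _ => mul_le_mul_of_nonneg_left ?_ (hw1nn k)
    rw [hθeq k]
    exact Wtheta_cost_le X Y k c p hc hp (hθvalid k)
  have hd0B : d0 c p w1 X Y = B ^ (1 / p) := rfl
  have hobjnn : ∀ (γ : ℝ), 0 < γ → ∀ (W : Fin T → Matrix (Fin (nX + 1)) (Fin (nY + 1)) ℝ),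
      (∀ k, Relaxed (W k)) → 0 ≤ obj c p γ w1 w2 X Y W := by
    intro γ hγ W hW
    rw [hobj]
    have := hlpnn W hW
    have := hswnn W
    have : (0:ℝ) ≤ γ ^ p := Real.rpow_nonneg hγ.le p
    apply Real.rpow_nonneg
    nlinarith [hlpnn W hW, hswnn W]
  have hlow : ∀ γ : ℝ, 0 < γ → d0 c p w1 X Y ≤ dbar c p γ w1 w2 X Y := by
    intro γ hγ
    unfold dbar
    refine le_ciInf fun W => ?_
    rw [hobj, hd0B]
    have h1 : B ≤ lp W.1 := hlpB W.1 W.2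
    have h2 : (0:ℝ) ≤ γ ^ p / 2 * sw W.1 :=
      mul_nonneg (div_nonneg (Real.rpow_nonneg hγ.le p) (by norm_num)) (hswnn W.1)
    exact Real.rpow_le_rpow hBnn (by linarith) (by positivity)
  have hup : ∀ γ : ℝ, 0 < γ →
      dbar c p γ w1 w2 X Y ≤ (B + γ ^ p / 2 * sw Wst) ^ (1 / p) := by
    intro γ hγ
    have hbdd : BddBelow (Set.range fun W : {W : Fin T → Matrix (Fin (nX + 1)) (Fin (nY + 1)) ℝ //
        ∀ k, Relaxed (W k)} => obj c p γ w1 w2 X Y W.1) := by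
      refine ⟨0, ?_⟩
      rintro r ⟨W, rfl⟩
      exact hobjnn γ hγ W.1 W.2
    have h1 : dbar c p γ w1 w2 X Y ≤ obj c p γ w1 w2 X Y Wst := by
      unfold dbar
      exact ciInf_le hbdd ⟨Wst, hWstRel⟩
    refine h1.trans ?_
    rw [hobj]
    have h2 : (0:ℝ) ≤ γ ^ p / 2 * sw Wst :=
      mul_nonneg (div_nonneg (Real.rpow_nonneg hγ.le p) (by norm_num)) (hswnn Wst)
    refine Real.rpow_le_rpow (by linarith [hlpnn Wst hWstRel]) (by linarith) (by positivity)
  have l1 : Tendsto (fun γ : ℝ => γ ^ p) (𝓝[>] (0:ℝ)) (𝓝 0) := by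
    have h := (Real.continuousAt_rpow_const 0 p (Or.inr hp0.le)).tendsto
    rw [Real.zero_rpow hp0'] at h
    exact h.mono_left nhdsWithin_le_nhds
  have l2 : Tendsto (fun γ : ℝ => B + γ ^ p / 2 * sw Wst) (𝓝[>] (0:ℝ)) (𝓝 B) := by
    have h := ((l1.div_const 2).mul_const (sw Wst)).const_add B
    simpa using h
  have l3 : Tendsto (fun γ : ℝ => (B + γ ^ p / 2 * sw Wst) ^ (1 / p)) (𝓝[>] (0:ℝ))
      (𝓝 (B ^ (1 / p))) :=
    ((Real.continuousAt_rpow_const B (1 / p) (Or.inr (by positivity))).tendsto).comp l2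
  rw [hd0B]
  refine tendsto_of_tendsto_of_tendsto_of_le_of_le' tendsto_const_nhds l3 ?_ ?_
  · filter_upwards [self_mem_nhdsWithin] with γ hγ
    rw [← hd0B]
    exact hlow γ hγ
  · filter_upwards [self_mem_nhdsWithin] with γ hγ
    exact hup γ hγ
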